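/- arXiv:1210.4774 — 4 statements merged into one kernel-verified Lean document; each statement's English description precedes it below -/
import Mathlib

section
/- Let H be a real symmetric matrix on a finite index set with nonpositive off-diagonal entries and connected nonzero pattern. If v is an eigenvector of H with all entries strictly positive and eigenvalue E, then E is the smallest eigenvalue of H. -/
/-- If a real symmetric matrix with nonpositive off-diagonal entries and
connected nonzero pattern has an eigenvector with all entries strictly
positive, then the corresponding eigenvalue is the smallest eigenvalue. -/
theorem positive_eigenvector_is_ground_state
    {S : Type*} [Fintype S] [DecidableEq S] [Nonempty S]
    (H : Matrix S S ℝ) (hsym : H.IsSymm)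
    (hoff : ∀ i j, i ≠ j → H i j ≤ 0)
    (hconn : ∀ i j : S,
      Relation.ReflTransGen (fun a b => a ≠ b ∧ H a b ≠ 0) i j)
    (v : S → ℝ) (hv : ∀ i, 0 < v i) (E : ℝ)
    (heig : H.mulVec v = E • v) :
    ∀ (μ : ℝ) (u : S → ℝ), u ≠ 0 → H.mulVec u = μ • u → E ≤ μ := by
  have key : ∀ (μ : ℝ) (u : S → ℝ), (∃ j, 0 < u j) → H.mulVec u = μ • u → E ≤ μ := by
    rintro μ u ⟨j0, hj0⟩ hu
    obtain ⟨i, -, hi⟩ := Finset.exists_max_image Finset.univ (fun j => u j / v j)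
      ⟨j0, Finset.mem_univ j0⟩
    set c := u i / v i with hc
    have hvi := hv i
    have hcpos : 0 < c :=
      lt_of_lt_of_le (div_pos hj0 (hv j0)) (hi j0 (Finset.mem_univ j0))
    have hle : ∀ j, u j ≤ c * v j := by
      intro j
      have := hi j (Finset.mem_univ j)
      calc u j = u j / v j * v j := (div_mul_cancel₀ (u j) (hv j).ne').symm
        _ ≤ c * v j := by nlinarith [hv j]
    have hui : u i = c * v i := by rw [hc, div_mul_cancel₀ (u i) hvi.ne']
    have h1 : ∑ j, H i j * v j = E * v i := by
      have := congrFun heig i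
      simpa [Matrix.mulVec, dotProduct] using this
    have h2 : ∑ j, H i j * u j = μ * u i := by
      have := congrFun hu i
      simpa [Matrix.mulVec, dotProduct] using this
    have hsum : ∑ j, H i j * (c * v j - u j) = c * (E * v i) - μ * u i := by
      rw [← h1, ← h2, Finset.mul_sum, ← Finset.sum_sub_distrib]
      exact Finset.sum_congr rfl fun j _ => by ring
    have hnonpos : ∑ j, H i j * (c * v j - u j) ≤ 0 := by
      apply Finset.sum_nonpos
      intro j _
      by_cases h : j = i
      · subst h; rw [← hui]; simp
      · have h3 := hoff i j fun e => h e.symm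
        have h4 := sub_nonneg.mpr (hle j)
        nlinarith
    rw [hsum] at hnonpos
    rw [hui] at hnonpos
    nlinarith [mul_pos hcpos hvi]
  intro μ u hu0 hu
  obtain ⟨j, hj⟩ := Function.ne_iff.mp hu0
  rcases lt_or_gt_of_ne hj with h | h
  · apply key μ (-u) ⟨j, by simpa using h⟩
    rw [Matrix.mulVec_neg, hu, smul_neg]
  · exact key μ u ⟨j, h⟩ hu
end

section
/- Let H be a real symmetric matrix on a finite set S with nonpositive off-diagonal entries whose nonzero pattern graph is connected. If u and v are both vectors with all entries strictly positive and both are eigenvectors of H, then u and v are proportional (they have the same eigenvalue, the ground-state eigenvalue). -/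
open Matrix


/-- For a real symmetric matrix with nonpositive off-diagonal entries and
connected nonzero pattern, any two eigenvectors with all entries strictly
positive have the same eigenvalue (the ground-state eigenvalue) and are
proportional. -/
theorem positive_eigenvectors_proportional
    {S : Type*} [Fintype S] [DecidableEq S] [Nonempty S]
    (H : Matrix S S ℝ) (hsym : H.IsSymm)
    (hoff : ∀ i j, i ≠ j → H i j ≤ 0)
    (hconn : ∀ i j : S,
      Relation.ReflTransGen (fun a b => a ≠ b ∧ H a b ≠ 0) i j)
    (u v : S → ℝ) (hu : ∀ i, 0 < u i) (hv : ∀ i, 0 < v i)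
    (Eu Ev : ℝ)
    (hequ : H.mulVec u = Eu • u) (heqv : H.mulVec v = Ev • v) :
    Eu = Ev ∧ ∃ c : ℝ, u = c • v := by
  -- First: Eu = Ev via symmetry of H.
  have hdot : 0 < u ⬝ᵥ v := by
    apply Finset.sum_pos
    · intro i _
      exact mul_pos (hu i) (hv i)
    · exact Finset.univ_nonempty
  have hsymdot : u ⬝ᵥ H.mulVec v = H.mulVec u ⬝ᵥ v := by
    rw [Matrix.dotProduct_mulVec, ← Matrix.mulVec_transpose, hsym.eq]
  have hE : Eu = Ev := by
    have h1 : u ⬝ᵥ H.mulVec v = Ev * (u ⬝ᵥ v) := by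
      rw [heqv, dotProduct_smul]; ring_nf
    have h2 : H.mulVec u ⬝ᵥ v = Eu * (u ⬝ᵥ v) := by
      rw [hequ, smul_dotProduct]; ring_nf
    have := h1 ▸ h2 ▸ hsymdot
    exact (mul_right_cancel₀ (ne_of_gt hdot) this.symm)
  -- Minimum ratio
  obtain ⟨k, _, hk⟩ := Finset.exists_min_image Finset.univ (fun i => u i / v i)
    ⟨Classical.arbitrary S, Finset.mem_univ _⟩
  set c : ℝ := u k / v k with hc
  set w : S → ℝ := fun i => u i - c * v i with hw
  have hwk : w k = 0 := by
    have h : c * v k = u k := by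
      rw [hc, div_mul_cancel₀ _ (ne_of_gt (hv k))]
    simp only [hw]; linarith
  have hwnn : ∀ i, 0 ≤ w i := by
    intro i
    have h1 : c ≤ u i / v i := hk i (Finset.mem_univ i)
    have h2 : c * v i ≤ u i := (le_div_iff₀ (hv i)).mp h1
    simp only [hw]; linarith
  have hweq : H.mulVec w = Eu • w := by
    have : w = u - c • v := by funext i; simp [hw]
    rw [this, Matrix.mulVec_sub, hequ, Matrix.mulVec_smul, heqv, hE]
    funext i
    simp
    ring
  -- zero propagation
  have hprop : ∀ i, Relation.ReflTransGen (fun a b => a ≠ b ∧ H a b ≠ 0) k i → w i = 0 := by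
    intro i h
    induction h with
    | refl => exact hwk
    | tail _ hbc ih =>
      rename_i b c' _
      -- w b = 0, b ≠ c', H b c' ≠ 0 ⇒ w c' = 0
      have hrow : H.mulVec w b = 0 := by rw [hweq]; simp [ih]
      have hsum : ∑ j ∈ Finset.univ.erase b, H b j * w j = 0 := by
        have : H.mulVec w b = H b b * w b + ∑ j ∈ Finset.univ.erase b, H b j * w j := by
          rw [Matrix.mulVec, dotProduct,
            ← Finset.add_sum_erase Finset.univ _ (Finset.mem_univ b)]
        rw [this, ih] at hrow
        linarith
      have hterm : ∀ j ∈ Finset.univ.erase b, H b j * w j = 0 := by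
        have := (Finset.sum_eq_zero_iff_of_nonpos ?_).mp hsum
        · exact this
        · intro j hj
          exact mul_nonpos_of_nonpos_of_nonneg
            (hoff b j (Finset.ne_of_mem_erase hj).symm) (hwnn j)
      have hc' : H b c' * w c' = 0 :=
        hterm c' (Finset.mem_erase.mpr ⟨hbc.1.symm, Finset.mem_univ _⟩)
      rcases mul_eq_zero.mp hc' with h | h
      · exact absurd h hbc.2
      · exact h
  have hall : ∀ i, w i = 0 := fun i => hprop i (hconn k i)
  refine ⟨hE, c, ?_⟩
  funext i
  have := hall i
  simp only [hw] at this
  simp only [Pi.smul_apply, smul_eq_mul]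
  linarith
end

section
/- Variational comparison lemma: Let H act on ℓ²(X × A) (X = hole positions, A = flavor configurations) with matrix elements ⟨(y,a')|H|(x,a)⟩ = −t_{x,y} δ_{a', a_{y→x}} for x ≠ y (with t_{x,y} ≥ 0 and a ↦ a_{y→x} a bijection A → A for each bond) plus diagonal terms ⟨(x,a)|H|(x,a)⟩ = V(x) depending only on x. If Ψ = Σ ψ(x,a) |x,a⟩ is any normalized vector and Φ = Σ_x φ(x)|x, a₀⟩ with φ(x) = (Σ_a ψ(x,a)²)^{1/2} for a fixed a₀ fixed by all maps a ↦ a_{y→x}, then ⟨Φ, HΦ⟩ ≤ ⟨Ψ, HΨ⟩ and ⟨Φ,Φ⟩ = ⟨Ψ,Ψ⟩. -/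
open Finset

variable {X A : Type*}

/-- The quadratic form (energy) of the infinite-`U` one-hole Hamiltonian on
`ℓ²(X × A)`: off-diagonal matrix elements `⟨(y,a')|H|(x,a)⟩ = −t_{x,y}` when
`a' = move x y a` (the flavor configuration with the flavor at `y` moved to
`x`), and diagonal elements `V(x)` depending only on the hole position. -/
def nagaokaEnergy [Fintype X] [Fintype A]
    (t : X → X → ℝ) (V : X → ℝ) (move : X → X → A ≃ A)
    (ψ : X → A → ℝ) : ℝ :=
  (∑ x : X, ∑ y : X, (-(t x y)) * ∑ a : A, ψ y (move x y a) * ψ x a)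
    + ∑ x : X, V x * ∑ a : A, ψ x a ^ 2

/-- Variational comparison lemma: replacing a normalized state `ψ` by the
state `Φ` concentrated on the fixed flavor configuration `a₀`, with amplitudes
`φ(x) = (Σ_a ψ(x,a)²)^{1/2}`, preserves the norm and does not increase the
energy. -/
theorem nagaoka_variational_comparison
    [Fintype X] [Fintype A] [DecidableEq A]
    (t : X → X → ℝ) (V : X → ℝ) (move : X → X → A ≃ A)
    (ht0 : ∀ x, t x x = 0)
    (htnn : ∀ x y, 0 ≤ t x y)
    (htsym : ∀ x y, t x y = t y x)
    (a₀ : A) (hfix : ∀ x y, move x y a₀ = a₀)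
    (ψ : X → A → ℝ)
    (Φ : X → A → ℝ)
    (hΦ : ∀ x a, Φ x a = if a = a₀ then Real.sqrt (∑ b : A, ψ x b ^ 2) else 0) :
    (∑ x : X, ∑ a : A, Φ x a ^ 2) = (∑ x : X, ∑ a : A, ψ x a ^ 2) ∧
    nagaokaEnergy t V move Φ ≤ nagaokaEnergy t V move ψ := by
  set S : X → ℝ := fun x => ∑ b : A, ψ x b ^ 2 with hS
  have hSnn : ∀ x, 0 ≤ S x := fun x => Finset.sum_nonneg fun b _ => sq_nonneg _
  have hnorm : ∀ x, ∑ a : A, Φ x a ^ 2 = S x := by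
    intro x
    have : ∀ a : A, Φ x a ^ 2 = if a = a₀ then S x else 0 := by
      intro a
      rw [hΦ]
      split <;> simp [Real.sq_sqrt (Finset.sum_nonneg fun b _ => sq_nonneg (ψ x b)), S]
    simp only [this]
    simp
  have hnormtot : (∑ x : X, ∑ a : A, Φ x a ^ 2) = ∑ x : X, ∑ a : A, ψ x a ^ 2 := by
    exact Finset.sum_congr rfl fun x _ => hnorm x
  refine ⟨hnormtot, ?_⟩
  unfold nagaokaEnergy
  have hdiag : (∑ x : X, V x * ∑ a : A, Φ x a ^ 2) = ∑ x : X, V x * ∑ a : A, ψ x a ^ 2 :=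
    Finset.sum_congr rfl fun x _ => by rw [hnorm x]
  rw [hdiag]
  apply add_le_add_left
  apply Finset.sum_le_sum
  intro x _
  apply Finset.sum_le_sum
  intro y _
  -- off-diagonal term
  have hΦsum : (∑ a : A, Φ y (move x y a) * Φ x a) = Real.sqrt (S y) * Real.sqrt (S x) := by
    have key : ∀ a : A, Φ y (move x y a) * Φ x a
        = if a = a₀ then Real.sqrt (S y) * Real.sqrt (S x) else 0 := by
      intro a
      rw [hΦ, hΦ]
      have hmv : move x y a = a₀ ↔ a = a₀ := by
        constructor
        · intro h
          exact (move x y).injective (h.trans (hfix x y).symm)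
        · intro h; rw [h, hfix]
      by_cases h : a = a₀ <;> simp [h, hmv, hfix, S]
    rw [Finset.sum_congr rfl fun a _ => key a, Finset.sum_ite_eq' univ a₀]
    simp
  rw [hΦsum]
  have hCS : (∑ a : A, ψ y (move x y a) * ψ x a) ≤ Real.sqrt (S y) * Real.sqrt (S x) := by
    have h1 : (∑ a : A, ψ y (move x y a) * ψ x a) ^ 2
        ≤ (∑ a : A, ψ y (move x y a) ^ 2) * (∑ a : A, ψ x a ^ 2) :=
      Finset.sum_mul_sq_le_sq_mul_sq _ _ _
    have h2 : (∑ a : A, ψ y (move x y a) ^ 2) = S y := by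
      rw [hS]
      exact Fintype.sum_equiv (move x y) _ _ fun a => rfl
    rw [h2] at h1
    calc (∑ a : A, ψ y (move x y a) * ψ x a)
        ≤ |∑ a : A, ψ y (move x y a) * ψ x a| := le_abs_self _
      _ = Real.sqrt ((∑ a : A, ψ y (move x y a) * ψ x a) ^ 2) := (Real.sqrt_sq_eq_abs _).symm
      _ ≤ Real.sqrt (S y * S x) := Real.sqrt_le_sqrt h1
      _ = Real.sqrt (S y) * Real.sqrt (S x) := Real.sqrt_mul (hSnn y) _
  nlinarith [htnn x y, hCS]
end

section
/- Generalized Nagaoka theorem (existence): For the SU(n) infinite-U Hubbard model on a finite lattice Λ with one hole (N_f = |Λ| − 1), hopping amplitudes t_{x,y} = t_{y,x} ≥ 0, and arbitrary density–density interaction V({n_x}), the minimum of the energy over the whole one-hole Hilbert space is attained in the fully polarized sector where all fermions carry flavor 1. -/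
open Finset

/-- A flavor configuration with a hole at `x`: an assignment of one of `n`
flavors to every site of `Λ` other than `x`. -/
abbrev HoleConf (Λ : Type*) (n : ℕ) (x : Λ) := {z : Λ // z ≠ x} → Fin n

/-- Moving the hole from `x` to `y`: the flavor at `y` is transferred to `x`,
all other flavors are unchanged, and the hole is now at `y`. -/
def moveConf {Λ : Type*} [DecidableEq Λ] {n : ℕ} (x y : Λ) (hxy : x ≠ y)
    (α : HoleConf Λ n x) : HoleConf Λ n y :=
  fun z => if h : (z : Λ) = x then α ⟨y, Ne.symm hxy⟩ else α ⟨z, h⟩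

/-- The quadratic form of the infinite-`U` SU(n) Hubbard Hamiltonian with one
hole in the basis `Ψ_{(x,α)}`: off-diagonal matrix elements
`⟨Ψ_{(y,α_{y→x})}|H|Ψ_{(x,α)}⟩ = −t_{x,y}` and diagonal elements `V x`
(the value of the density–density interaction, which depends only on the hole
position). -/
def suNEnergy {Λ : Type*} [Fintype Λ] [DecidableEq Λ] (n : ℕ)
    (t : Λ → Λ → ℝ) (V : Λ → ℝ)
    (ψ : (x : Λ) → HoleConf Λ n x → ℝ) : ℝ :=
  (∑ x : Λ, ∑ y : Λ,
    if h : x = y then 0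
    else (-(t x y)) * ∑ α : HoleConf Λ n x, ψ y (moveConf x y h α) * ψ x α)
  + ∑ x : Λ, V x * ∑ α : HoleConf Λ n x, ψ x α ^ 2

set_option linter.unusedSectionVars false

section aux
variable {Λ : Type*} [Fintype Λ] [DecidableEq Λ] {n : ℕ}

lemma move_move (x y : Λ) (h : x ≠ y) (α : HoleConf Λ n x) :
    moveConf y x h.symm (moveConf x y h α) = α := by
  funext z
  rcases z with ⟨z, hz⟩
  by_cases hzy : z = y
  · subst hzy
    simp [moveConf, hz]
  · simp [moveConf, hzy, hz]

lemma move_bijective (x y : Λ) (h : x ≠ y) :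
    Function.Bijective (moveConf (Λ := Λ) (n := n) x y h) :=
  Function.bijective_iff_has_inverse.mpr
    ⟨moveConf y x h.symm, fun α => move_move x y h α, fun β => move_move y x h.symm β⟩

lemma sum_move (x y : Λ) (h : x ≠ y) (f : HoleConf Λ n y → ℝ) :
    ∑ α : HoleConf Λ n x, f (moveConf x y h α) = ∑ β : HoleConf Λ n y, f β :=
  Fintype.sum_bijective _ (move_bijective x y h) _ _ (fun _ => rfl)

variable [NeZero n]

lemma sum_polar_sq (φ : Λ → ℝ) (x : Λ) :
    ∑ α : HoleConf Λ n x, (if (∀ z, α z = (0 : Fin n)) then φ x else 0) ^ 2 = φ x ^ 2 := by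
  rw [Finset.sum_eq_single_of_mem (fun _ => (0 : Fin n)) (mem_univ _)]
  · simp
  · intro b _ hb
    have : ¬ (∀ z, b z = (0 : Fin n)) := fun hP => hb (funext hP)
    rw [if_neg this]
    exact zero_pow two_ne_zero

lemma move_zero_iff (x y : Λ) (h : x ≠ y) (α : HoleConf Λ n x) :
    (∀ z, moveConf x y h α z = 0) ↔ (∀ z, α z = 0) := by
  constructor
  · intro hm z
    rcases z with ⟨z, hz⟩
    by_cases hzy : z = y
    · subst hzy
      have := hm ⟨x, h⟩
      simpa [moveConf] using this
    · have := hm ⟨z, hzy⟩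
      simpa [moveConf, hz] using this
  · rintro ha ⟨z, hzy⟩
    simp only [moveConf]
    split_ifs <;> exact ha _

lemma sum_polar_cross (φ : Λ → ℝ) (x y : Λ) (h : x ≠ y) :
    ∑ α : HoleConf Λ n x,
      (if (∀ z, moveConf x y h α z = (0 : Fin n)) then φ y else 0) *
      (if (∀ z, α z = (0 : Fin n)) then φ x else 0) = φ y * φ x := by
  rw [Finset.sum_eq_single_of_mem (fun _ => (0 : Fin n)) (mem_univ _)]
  · rw [if_pos fun _ => rfl, if_pos ((move_zero_iff x y h _).mpr fun _ => rfl)]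
  · intro b _ hb
    have : ¬ (∀ z, b z = (0 : Fin n)) := fun hP => hb (funext hP)
    rw [if_neg this, mul_zero]

lemma energy_polar (t : Λ → Λ → ℝ) (V : Λ → ℝ) (φ : Λ → ℝ) :
    suNEnergy n t V (fun x α => if (∀ z, α z = (0 : Fin n)) then φ x else 0)
    = (∑ x : Λ, ∑ y : Λ, if x = y then (0:ℝ) else -(t x y) * (φ y * φ x))
      + ∑ x : Λ, V x * φ x ^ 2 := by
  unfold suNEnergy
  congr 1
  · refine Finset.sum_congr rfl fun x _ => Finset.sum_congr rfl fun y _ => ?_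
    by_cases h : x = y
    · simp [h]
    · rw [dif_neg h, if_neg h, sum_polar_cross]
  · exact Finset.sum_congr rfl fun x _ => by rw [sum_polar_sq]

lemma energy_comparison (t : Λ → Λ → ℝ) (V : Λ → ℝ) (htnn : ∀ x y, 0 ≤ t x y)
    (ψ : (x : Λ) → HoleConf Λ n x → ℝ) :
    suNEnergy n t V (fun x α => if (∀ z, α z = (0 : Fin n)) then
        Real.sqrt (∑ β : HoleConf Λ n x, ψ x β ^ 2) else 0)
    ≤ suNEnergy n t V ψ := by
  set φ : Λ → ℝ := fun x => Real.sqrt (∑ β : HoleConf Λ n x, ψ x β ^ 2) with hφ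
  have hφsq : ∀ x, φ x ^ 2 = ∑ β : HoleConf Λ n x, ψ x β ^ 2 := fun x =>
    Real.sq_sqrt (Finset.sum_nonneg fun _ _ => sq_nonneg _)
  rw [energy_polar]
  unfold suNEnergy
  apply add_le_add
  · refine Finset.sum_le_sum fun x _ => Finset.sum_le_sum fun y _ => ?_
    by_cases h : x = y
    · simp [h]
    · rw [if_neg h, dif_neg h]
      have hA : (∑ α : HoleConf Λ n x, ψ y (moveConf x y h α) * ψ x α) ≤ φ y * φ x := by
        calc ∑ α : HoleConf Λ n x, ψ y (moveConf x y h α) * ψ x α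
            ≤ Real.sqrt (∑ α : HoleConf Λ n x, ψ y (moveConf x y h α) ^ 2) *
              Real.sqrt (∑ α : HoleConf Λ n x, ψ x α ^ 2) :=
              Real.sum_mul_le_sqrt_mul_sqrt _ _ _
          _ = φ y * φ x := by rw [sum_move x y h (fun β => ψ y β ^ 2)]
      have h2 := mul_le_mul_of_nonneg_left hA (htnn x y)
      rw [neg_mul, neg_mul]
      exact neg_le_neg h2
  · exact le_of_eq (Finset.sum_congr rfl fun x _ => by rw [hφsq])

lemma sInf_eq_of_subset (A B : Set ℝ) (hBA : B ⊆ A)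
    (hAB : ∀ e ∈ A, ∃ e' ∈ B, e' ≤ e) (hB : B.Nonempty) : sInf A = sInf B := by
  by_cases hbd : BddBelow B
  · have hAne : A.Nonempty := hB.mono hBA
    apply le_antisymm
    · have hbdA : BddBelow A := by
        obtain ⟨b, hb⟩ := hbd
        exact ⟨b, fun e he => by
          obtain ⟨e', he', hle⟩ := hAB e he
          exact (hb he').trans hle⟩
      exact csInf_le_csInf hbdA hB hBA
    · refine le_csInf hAne fun e he => ?_
      obtain ⟨e', he', hle⟩ := hAB e he
      exact (csInf_le hbd he').trans hle
  · rw [Real.sInf_of_not_bddBelow hbd, Real.sInf_of_not_bddBelow]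
    intro hbdA
    obtain ⟨b, hb⟩ := hbdA
    exact hbd ⟨b, fun e he => hb (hBA he)⟩

end aux

/-- Generalized Nagaoka theorem (existence): for the SU(n) infinite-`U`
Hubbard model with one hole, nonnegative symmetric hopping amplitudes and
arbitrary density–density interaction, the minimum of the energy over the
whole one-hole Hilbert space equals the minimum over the fully polarized
sector in which every fermion carries flavor `1` (here the flavor `0 : Fin n`). -/
theorem nagaoka_existence {Λ : Type*} [Fintype Λ] [DecidableEq Λ] [Nonempty Λ]
    (n : ℕ) [NeZero n]
    (t : Λ → Λ → ℝ) (V : Λ → ℝ)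
    (htnn : ∀ x y, 0 ≤ t x y)
    (htsym : ∀ x y, t x y = t y x)
    (ht0 : ∀ x, t x x = 0) :
    sInf {e : ℝ | ∃ ψ : (x : Λ) → HoleConf Λ n x → ℝ,
        (∑ x : Λ, ∑ α : HoleConf Λ n x, ψ x α ^ 2) = 1 ∧ suNEnergy n t V ψ = e}
    = sInf {e : ℝ | ∃ (φ : Λ → ℝ) (ψ : (x : Λ) → HoleConf Λ n x → ℝ),
        (∀ x (α : HoleConf Λ n x),
          ψ x α = if (∀ z, α z = (0 : Fin n)) then φ x else 0) ∧
        (∑ x : Λ, ∑ α : HoleConf Λ n x, ψ x α ^ 2) = 1 ∧ suNEnergy n t V ψ = e} := by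
  apply sInf_eq_of_subset
  · rintro e ⟨φ, ψ, hdef, hnorm, hE⟩
    exact ⟨ψ, hnorm, hE⟩
  · rintro e ⟨ψ, hnorm, hE⟩
    set φ : Λ → ℝ := fun x => Real.sqrt (∑ β : HoleConf Λ n x, ψ x β ^ 2) with hφ
    have hφsq : ∀ x, φ x ^ 2 = ∑ β : HoleConf Λ n x, ψ x β ^ 2 := fun x =>
      Real.sq_sqrt (Finset.sum_nonneg fun _ _ => sq_nonneg _)
    refine ⟨suNEnergy n t V
        (fun x α => if (∀ z, α z = (0 : Fin n)) then φ x else 0),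
      ⟨φ, _, fun x α => rfl, ?_, rfl⟩, hE ▸ energy_comparison t V htnn ψ⟩
    calc ∑ x : Λ, ∑ α : HoleConf Λ n x,
          (if (∀ z, α z = (0 : Fin n)) then φ x else 0) ^ 2
        = ∑ x : Λ, φ x ^ 2 := Finset.sum_congr rfl fun x _ => sum_polar_sq φ x
      _ = ∑ x : Λ, ∑ β : HoleConf Λ n x, ψ x β ^ 2 :=
          Finset.sum_congr rfl fun x _ => hφsq x
      _ = 1 := hnorm
  · obtain ⟨x0⟩ := ‹Nonempty Λ›
    refine ⟨suNEnergy n t V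
        (fun x α => if (∀ z, α z = (0 : Fin n)) then (if x = x0 then (1:ℝ) else 0) else 0),
      fun x => if x = x0 then (1:ℝ) else 0, _, fun x α => rfl, ?_, rfl⟩
    have : ∀ x : Λ, ∑ α : HoleConf Λ n x,
        (if (∀ z, α z = (0 : Fin n)) then (if x = x0 then (1:ℝ) else 0) else 0) ^ 2
        = if x = x0 then (1:ℝ) else 0 := by
      intro x
      rw [sum_polar_sq (fun x => if x = x0 then (1:ℝ) else 0) x]
      by_cases h : x = x0 <;> simp [h]
    rw [Finset.sum_congr rfl fun x _ => this x, Finset.sum_ite_eq' univ x0 (fun _ => (1:ℝ))]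
    simp
end
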